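/- arXiv:1507.03063 — 4 statements merged into one kernel-verified Lean document; each statement's English description precedes it below -/
import Mathlib

section
/- For every k > 0, Φ(√k · (1.5 − 9) / √(100 + 1)) > Φ(√k · (2 − 9) / √(20 + 1)). Consequently, in the two-agent experiment where agent 1 chooses between actions with (mean, variance) equal to (1.5, 100) or (2, 20), agent 2 plays (9, 1), and each agent's score is the sample mean of k independent Gaussian outcomes with the chosen mean and variance, agent 1's probability of achieving the higher score is strictly larger under the action (1.5, 100) than under its natural action (2, 20). -/
open MeasureTheory ProbabilityTheory Real

/-- The cumulative distribution function `Φ` of the standard normal distribution `N(0,1)`. -/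
noncomputable def stdNormalCDF (x : ℝ) : ℝ := cdf (gaussianReal 0 1) x

open Set
open scoped ENNReal NNReal

namespace StmtAux

lemma gaussianPDFReal_mul_eq (a b : ℝ) (v w : ℝ≥0) (hv : v ≠ 0) (hw : w ≠ 0) (z x : ℝ) :
    gaussianPDFReal a v x * gaussianPDFReal b w (z - x)
      = gaussianPDFReal (a + b) (v + w) z
        * gaussianPDFReal (a + (v:ℝ)/((v:ℝ)+(w:ℝ)) * (z - a - b)) (v * w / (v + w)) x := by
  have hv' : (0:ℝ) < v := lt_of_le_of_ne v.2 (by exact_mod_cast (Ne.symm hv))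
  have hw' : (0:ℝ) < w := lt_of_le_of_ne w.2 (by exact_mod_cast (Ne.symm hw))
  have hu : (0:ℝ) < (v:ℝ) + w := by linarith
  simp only [gaussianPDFReal, NNReal.coe_add, NNReal.coe_mul, NNReal.coe_div]
  rw [mul_mul_mul_comm, mul_mul_mul_comm ((Real.sqrt (2*π*((v:ℝ)+(w:ℝ))))⁻¹),
    ← Real.exp_add, ← Real.exp_add]
  have hπ := Real.pi_pos
  congr 1
  · rw [← mul_inv, ← mul_inv, ← Real.sqrt_mul (by positivity), ← Real.sqrt_mul (by positivity)]
    congr 2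
    field_simp
  · rw [Real.exp_eq_exp]
    field_simp
    ring

lemma aux_var_ne (v w : ℝ≥0) (hv : v ≠ 0) (hw : w ≠ 0) : v * w / (v + w) ≠ 0 := by
  have : v + w ≠ 0 := by positivity
  simp [div_eq_zero_iff, hv, hw, this]

lemma integral_gaussianPDFReal_mul (a b : ℝ) (v w : ℝ≥0) (hv : v ≠ 0) (hw : w ≠ 0) (z : ℝ) :
    ∫ x, gaussianPDFReal a v x * gaussianPDFReal b w (z - x)
      = gaussianPDFReal (a + b) (v + w) z := by
  simp_rw [gaussianPDFReal_mul_eq a b v w hv hw z]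
  rw [integral_const_mul, integral_gaussianPDFReal_eq_one _ (aux_var_ne v w hv hw), mul_one]

lemma integrable_gaussianPDFReal_mul (a b : ℝ) (v w : ℝ≥0) (hv : v ≠ 0) (hw : w ≠ 0) (z : ℝ) :
    Integrable (fun x => gaussianPDFReal a v x * gaussianPDFReal b w (z - x)) := by
  simp_rw [gaussianPDFReal_mul_eq a b v w hv hw z]
  exact (integrable_gaussianPDFReal _ _).const_mul _

lemma lintegral_gaussianPDF_mul (a b : ℝ) (v w : ℝ≥0) (hv : v ≠ 0) (hw : w ≠ 0) (z : ℝ) :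
    ∫⁻ x, gaussianPDF a v x * gaussianPDF b w (z - x)
      = gaussianPDF (a + b) (v + w) z := by
  simp_rw [gaussianPDF, ← ENNReal.ofReal_mul (gaussianPDFReal_nonneg a v _)]
  rw [← MeasureTheory.ofReal_integral_eq_lintegral_ofReal
      (integrable_gaussianPDFReal_mul a b v w hv hw z)
      (Filter.Eventually.of_forall fun x =>
        mul_nonneg (gaussianPDFReal_nonneg _ _ _) (gaussianPDFReal_nonneg _ _ _)),
    integral_gaussianPDFReal_mul a b v w hv hw z]

lemma gaussianReal_conv (a b : ℝ) (v w : ℝ≥0) :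
    ((gaussianReal a v).prod (gaussianReal b w)).map (fun p : ℝ × ℝ => p.1 + p.2)
      = gaussianReal (a + b) (v + w) := by
  by_cases hv : v = 0
  · subst hv
    rw [gaussianReal_zero_var, MeasureTheory.Measure.dirac_prod,
      Measure.map_map measurable_add (measurable_prodMk_left), zero_add]
    have : ((fun p : ℝ × ℝ => p.1 + p.2) ∘ Prod.mk a) = (fun y : ℝ => a + y) := rfl
    rw [this, gaussianReal_map_const_add, add_comm]
  by_cases hw : w = 0
  · subst hw
    rw [gaussianReal_zero_var, MeasureTheory.Measure.prod_dirac,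
      Measure.map_map measurable_add (measurable_prodMk_right), add_zero]
    have : ((fun p : ℝ × ℝ => p.1 + p.2) ∘ (fun x : ℝ => (x, b))) = (fun x : ℝ => x + b) := rfl
    rw [this, gaussianReal_map_add_const]
  have hvw : v + w ≠ 0 := by positivity
  ext s hs
  rw [Measure.map_apply measurable_add hs, Measure.prod_apply (measurable_add hs)]
  have h1 : ∀ x : ℝ, (gaussianReal b w) (Prod.mk x ⁻¹' ((fun p : ℝ × ℝ => p.1 + p.2) ⁻¹' s))
      = ∫⁻ y in s, gaussianPDF b w (y - x) := by
    intro x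
    have hpre : (Prod.mk x ⁻¹' ((fun p : ℝ × ℝ => p.1 + p.2) ⁻¹' s))
        = (fun y : ℝ => x + y) ⁻¹' s := rfl
    rw [hpre, ← Measure.map_apply (measurable_const_add x) hs, gaussianReal_map_const_add,
      gaussianReal_of_var_ne_zero _ hw, withDensity_apply _ hs]
    congr 1
    ext y
    rw [gaussianPDF, gaussianPDF, gaussianPDFReal_sub]
  simp_rw [h1]
  have hFm : Measurable fun x : ℝ => ∫⁻ y in s, gaussianPDF b w (y - x) :=
    Measurable.lintegral_prod_right'
      (f := fun p : ℝ × ℝ => gaussianPDF b w (p.2 - p.1))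
      ((measurable_gaussianPDF b w).comp (measurable_snd.sub measurable_fst))
  rw [gaussianReal_of_var_ne_zero _ hv, gaussianReal_of_var_ne_zero _ hvw,
    lintegral_withDensity_eq_lintegral_mul _ (measurable_gaussianPDF a v) hFm,
    withDensity_apply _ hs]
  simp only [Pi.mul_apply]
  have hswap : ∫⁻ x : ℝ, gaussianPDF a v x * ∫⁻ y in s, gaussianPDF b w (y - x)
      = ∫⁻ y in s, ∫⁻ x : ℝ, gaussianPDF a v x * gaussianPDF b w (y - x) := by
    have : ∀ x : ℝ, gaussianPDF a v x * (∫⁻ y in s, gaussianPDF b w (y - x))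
        = ∫⁻ y in s, gaussianPDF a v x * gaussianPDF b w (y - x) := fun x =>
      (lintegral_const_mul _ ((measurable_gaussianPDF b w).comp (measurable_id.sub_const x))).symm
    simp_rw [this]
    exact lintegral_lintegral_swap
      (((measurable_gaussianPDF a v).comp measurable_fst).mul
        ((measurable_gaussianPDF b w).comp (measurable_snd.sub measurable_fst))).aemeasurable
  rw [hswap]
  exact setLIntegral_congr_fun hs
    (fun y _ => lintegral_gaussianPDF_mul a b v w hv hw y)

lemma neg_one_sq_nnreal : (⟨(-1:ℝ)^2, sq_nonneg _⟩ : ℝ≥0) = 1 := by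
  ext; norm_num

lemma map_sub_gaussian {Ω : Type*} [MeasurableSpace Ω] (P : Measure Ω) [IsProbabilityMeasure P]
    (X Y : Ω → ℝ) (hX : Measurable X) (hY : Measurable Y) (hXY : IndepFun X Y P)
    (a b : ℝ) (v w : ℝ≥0) (hXd : P.map X = gaussianReal a v) (hYd : P.map Y = gaussianReal b w) :
    P.map (fun ω => X ω - Y ω) = gaussianReal (a - b) (v + w) := by
  have hZ : Measurable fun ω => -Y ω := hY.neg
  have hZd : P.map (fun ω => -Y ω) = gaussianReal (-b) w := by
    have h : (fun ω => -Y ω) = (fun x : ℝ => (-1) * x) ∘ Y := by funext ω; simp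
    rw [h, ← Measure.map_map (measurable_const_mul _) hY, hYd,
      gaussianReal_map_const_mul]
    congr 1
    · ring
    · ext; simp
  have hind : IndepFun X (fun ω => -Y ω) P := hXY.comp measurable_id measurable_neg
  have hpair : P.map (fun ω => (X ω, -Y ω)) = (P.map X).prod (P.map (fun ω => -Y ω)) :=
    (indepFun_iff_map_prod_eq_prod_map_map hX.aemeasurable hZ.aemeasurable).mp hind
  have h2 : (fun ω => X ω - Y ω) = (fun p : ℝ × ℝ => p.1 + p.2) ∘ (fun ω => (X ω, -Y ω)) := by
    funext ω; simp [sub_eq_add_neg]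
  rw [h2, ← Measure.map_map measurable_add (hX.prodMk hZ), hpair, hXd, hZd,
    gaussianReal_conv, ← sub_eq_add_neg]

lemma gaussianReal_singleton (m c : ℝ) (v : ℝ≥0) (hv : v ≠ 0) : gaussianReal m v {c} = 0 := by
  rw [gaussianReal_of_var_ne_zero _ hv, withDensity_apply _ (measurableSet_singleton c)]
  rw [setLIntegral_measure_zero _ _ (Real.volume_singleton)]

lemma gaussianReal_Iio_eq_Iic (m c : ℝ) (v : ℝ≥0) (hv : v ≠ 0) :
    gaussianReal m v (Iio c) = gaussianReal m v (Iic c) := by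
  rw [← Iio_union_right, measure_union (by simp) (measurableSet_singleton c),
    gaussianReal_singleton m c v hv, add_zero]

lemma stdNormal_symm (c : ℝ) :
    gaussianReal 0 1 (Ioi (-c)) = gaussianReal 0 1 (Iic c) := by
  have hmap : (gaussianReal 0 1).map (fun x : ℝ => (-1) * x) = gaussianReal 0 1 := by
    rw [gaussianReal_map_const_mul]
    congr 1
    · ring
    · ext; simp
  have hpre : (fun x : ℝ => (-1) * x) ⁻¹' (Ioi (-c)) = Iio c := by
    ext x; simp [neg_lt, lt_neg]
  calc gaussianReal 0 1 (Ioi (-c))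
      = ((gaussianReal 0 1).map (fun x : ℝ => (-1) * x)) (Ioi (-c)) := by rw [hmap]
    _ = gaussianReal 0 1 (Iio c) := by
        rw [Measure.map_apply (measurable_const_mul _) measurableSet_Ioi, hpre]
    _ = gaussianReal 0 1 (Iic c) := gaussianReal_Iio_eq_Iic 0 c 1 one_ne_zero

lemma gaussianReal_Ioi_zero (m : ℝ) (s : ℝ≥0) (hs : s ≠ 0) :
    gaussianReal m s (Ioi 0) = ENNReal.ofReal (stdNormalCDF (m / Real.sqrt s)) := by
  have hs' : (0:ℝ) < s := lt_of_le_of_ne s.2 (by exact_mod_cast (Ne.symm hs))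
  have hsq : (0:ℝ) < Real.sqrt s := Real.sqrt_pos.mpr hs'
  have hmap : (gaussianReal 0 1).map (fun x : ℝ => x * Real.sqrt s + m) = gaussianReal m s := by
    have h1 : (fun x : ℝ => x * Real.sqrt s + m)
        = (fun x : ℝ => x + m) ∘ (fun x : ℝ => x * Real.sqrt s) := rfl
    rw [h1, ← Measure.map_map (measurable_add_const m) (measurable_mul_const _),
      gaussianReal_map_mul_const, gaussianReal_map_add_const]
    congr 1
    · simp
    · ext
      simp [Real.sq_sqrt s.2]
  have hpre : (fun x : ℝ => x * Real.sqrt s + m) ⁻¹' (Ioi 0) = Ioi (-(m / Real.sqrt s)) := by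
    ext x
    simp only [mem_preimage, mem_Ioi]
    constructor
    · intro h; rw [← neg_div, div_lt_iff₀ hsq]; linarith
    · intro h; rw [← neg_div, div_lt_iff₀ hsq] at h; linarith
  rw [← hmap, Measure.map_apply (by fun_prop) measurableSet_Ioi, hpre,
    stdNormal_symm, stdNormalCDF, ofReal_cdf]

lemma stdNormalCDF_strictMono {x y : ℝ} (hxy : x < y) : stdNormalCDF x < stdNormalCDF y := by
  have key : gaussianReal 0 1 (Iic x) < gaussianReal 0 1 (Iic y) := by
    have hunion : Iic y = Iic x ∪ Ioc x y := (Iic_union_Ioc_eq_Iic hxy.le).symm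
    have hne : gaussianReal 0 1 (Ioc x y) ≠ 0 := by
      rw [gaussianReal_of_var_ne_zero _ one_ne_zero]
      rw [Ne, withDensity_apply_eq_zero (measurable_gaussianPDF 0 1)]
      have : {z : ℝ | gaussianPDF 0 1 z ≠ 0} = univ := by
        ext z
        simp [(gaussianPDF_pos 0 one_ne_zero z).ne']
      rw [this, univ_inter]
      simp [Real.volume_Ioc, sub_pos, hxy]
    calc gaussianReal 0 1 (Iic x)
        < gaussianReal 0 1 (Iic x) + gaussianReal 0 1 (Ioc x y) :=
          ENNReal.lt_add_right (measure_ne_top _ _) hne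
      _ = gaussianReal 0 1 (Iic y) := by
          rw [hunion, measure_union (by exact Iic_disjoint_Ioc le_rfl) measurableSet_Ioc]
  have h1 := ofReal_cdf (gaussianReal 0 1) x
  have h2 := ofReal_cdf (gaussianReal 0 1) y
  rw [← h1, ← h2] at key
  exact (ENNReal.ofReal_lt_ofReal_iff_of_nonneg (cdf_nonneg _ _)).mp key

end StmtAux

open StmtAux

/-- For every `k > 0`, `Φ(√k (1.5 − 9)/√(100 + 1)) > Φ(√k (2 − 9)/√(20 + 1))`.
Consequently, if agent 1's score is the sample mean of `k` Gaussian outcomes (so it is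
distributed `N(1.5, 100/k)` under action `(1.5, 100)` and `N(2, 20/k)` under the natural
action `(2, 20)`), and agent 2's score is distributed `N(9, 1/k)` independently, then
agent 1's probability of achieving the higher score is strictly larger under `(1.5, 100)`
than under `(2, 20)`. -/
theorem stmt_1 (k : ℝ) (hk : 0 < k)
    {Ω : Type*} [MeasurableSpace Ω] (P : Measure Ω) [IsProbabilityMeasure P]
    (X X' Y : Ω → ℝ) (hX : Measurable X) (hX' : Measurable X') (hY : Measurable Y)
    (hXY : IndepFun X Y P) (hX'Y : IndepFun X' Y P)
    (hXd : P.map X = gaussianReal 1.5 (100 / k).toNNReal)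
    (hX'd : P.map X' = gaussianReal 2 (20 / k).toNNReal)
    (hYd : P.map Y = gaussianReal 9 (1 / k).toNNReal) :
    stdNormalCDF (Real.sqrt k * (1.5 - 9) / Real.sqrt (100 + 1))
        > stdNormalCDF (Real.sqrt k * (2 - 9) / Real.sqrt (20 + 1))
      ∧ P {ω | X ω > Y ω} > P {ω | X' ω > Y ω} := by
  have h21p : (0:ℝ) < Real.sqrt (20+1) := Real.sqrt_pos.mpr (by norm_num)
  have h101p : (0:ℝ) < Real.sqrt (100+1) := Real.sqrt_pos.mpr (by norm_num)
  have h21 : Real.sqrt (20+1) < 5 := by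
    nlinarith [Real.sq_sqrt (show (0:ℝ) ≤ 20+1 by norm_num), Real.sqrt_nonneg (20+1:ℝ)]
  have h101 : (10:ℝ) < Real.sqrt (100+1) := by
    nlinarith [Real.sq_sqrt (show (0:ℝ) ≤ 100+1 by norm_num), Real.sqrt_nonneg (100+1:ℝ)]
  have hskp : (0:ℝ) < Real.sqrt k := Real.sqrt_pos.mpr hk
  have hba : Real.sqrt k * (2-9)/Real.sqrt (20+1)
      < Real.sqrt k * (1.5-9)/Real.sqrt (100+1) := by
    rw [div_lt_div_iff₀ h21p h101p]
    have A := mul_lt_mul_of_pos_left h21 hskp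
    have B := mul_lt_mul_of_pos_left h101 hskp
    norm_num at A B ⊢
    nlinarith [A, B, hskp]
  refine ⟨stdNormalCDF_strictMono hba, ?_⟩
  -- variances
  have hv1 : (100/k).toNNReal ≠ 0 := by
    rw [Ne, Real.toNNReal_eq_zero]; push_neg; positivity
  have hv2 : (20/k).toNNReal ≠ 0 := by
    rw [Ne, Real.toNNReal_eq_zero]; push_neg; positivity
  have hw : (1/k).toNNReal ≠ 0 := by
    rw [Ne, Real.toNNReal_eq_zero]; push_neg; positivity
  have hs1 : (100/k).toNNReal + (1/k).toNNReal ≠ 0 := by positivity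
  have hs2 : (20/k).toNNReal + (1/k).toNNReal ≠ 0 := by positivity
  have hc1 : ((((100/k).toNNReal + (1/k).toNNReal : ℝ≥0)) : ℝ) = 101/k := by
    push_cast
    rw [Real.coe_toNNReal _ (by positivity), Real.coe_toNNReal _ (by positivity)]
    field_simp
    norm_num
  have hc2 : ((((20/k).toNNReal + (1/k).toNNReal : ℝ≥0)) : ℝ) = 21/k := by
    push_cast
    rw [Real.coe_toNNReal _ (by positivity), Real.coe_toNNReal _ (by positivity)]
    field_simp
    norm_num
  have harg1 : (1.5-9:ℝ)/Real.sqrt (101/k)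
      = Real.sqrt k * (1.5-9)/Real.sqrt (100+1) := by
    rw [show Real.sqrt (100+1) = Real.sqrt 101 by norm_num,
      Real.sqrt_div (by norm_num : (0:ℝ) ≤ 101) k, div_div_eq_mul_div]
    ring
  have harg2 : (2-9:ℝ)/Real.sqrt (21/k)
      = Real.sqrt k * (2-9)/Real.sqrt (20+1) := by
    rw [show Real.sqrt (20+1) = Real.sqrt 21 by norm_num,
      Real.sqrt_div (by norm_num : (0:ℝ) ≤ 21) k, div_div_eq_mul_div]
    ring
  have hmap1 := map_sub_gaussian P X Y hX hY hXY _ _ _ _ hXd hYd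
  have hmap2 := map_sub_gaussian P X' Y hX' hY hX'Y _ _ _ _ hX'd hYd
  have hset1 : {ω | X ω > Y ω} = (fun ω => X ω - Y ω) ⁻¹' (Ioi 0) := by
    ext ω; simp [sub_pos]
  have hset2 : {ω | X' ω > Y ω} = (fun ω => X' ω - Y ω) ⁻¹' (Ioi 0) := by
    ext ω; simp [sub_pos]
  have e1 : P {ω | X ω > Y ω}
      = ENNReal.ofReal (stdNormalCDF (Real.sqrt k * (1.5 - 9) / Real.sqrt (100 + 1))) := by
    rw [hset1, ← Measure.map_apply (f := fun ω => X ω - Y ω) (hX.sub hY) measurableSet_Ioi, hmap1,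
      gaussianReal_Ioi_zero _ _ hs1, hc1, harg1]
  have e2 : P {ω | X' ω > Y ω}
      = ENNReal.ofReal (stdNormalCDF (Real.sqrt k * (2 - 9) / Real.sqrt (20 + 1))) := by
    rw [hset2, ← Measure.map_apply (f := fun ω => X' ω - Y ω) (hX'.sub hY) measurableSet_Ioi, hmap2,
      gaussianReal_Ioi_zero _ _ hs2, hc2, harg2]
  rw [gt_iff_lt, e1, e2]
  exact (ENNReal.ofReal_lt_ofReal_iff_of_nonneg (cdf_nonneg _ _)).mpr
    (stdNormalCDF_strictMono hba)
end

section
/- (Multivariate delta method with a linear functional, the key step in the proof of Theorem 1.) Let (T_k) be a sequence of ℝⁿ-valued random vectors, θ ∈ ℝⁿ, and Σ a symmetric positive semidefinite n×n matrix, such that √k · (T_k − θ) converges in distribution to the n-variate Gaussian N(0, Σ). Let f : ℝ → ℝ be continuously differentiable, applied coordinatewise, let J = diag(f'(θ₁), …, f'(θₙ)), and let c ∈ ℝⁿ. Then √k · (cᵀ f(T_k) − cᵀ f(θ)) converges in distribution to the Gaussian N(0, cᵀ J Σ Jᵀ c). -/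
open MeasureTheory ProbabilityTheory Filter Real Matrix

/-- A sequence of random variables `X k : Ω → E` on `(Ω, P)` converges in distribution to the
probability measure `μ` on `E` if the expectations of every bounded continuous function
converge, i.e. the laws converge weakly to `μ`. -/
def TendstoInDistribution {Ω E : Type*} [MeasurableSpace Ω] [MeasurableSpace E]
    [TopologicalSpace E] (P : Measure Ω) (X : ℕ → Ω → E) (μ : Measure E) : Prop :=
  ∀ f : BoundedContinuousFunction E ℝ,
    Tendsto (fun k => ∫ ω, f (X k ω) ∂P) atTop (nhds (∫ x, f x ∂μ))

/-- `μ` is the centered multivariate Gaussian distribution `N(0, S)` on `ℝⁿ`: it is a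
probability measure all of whose one-dimensional linear projections `x ↦ cᵀ x` are
Gaussian `N(0, cᵀ S c)`. -/
def IsCenteredGaussian {n : ℕ} (μ : Measure (Fin n → ℝ)) (S : Matrix (Fin n) (Fin n) ℝ) :
    Prop :=
  IsProbabilityMeasure μ ∧
    ∀ c : Fin n → ℝ, μ.map (fun x => c ⬝ᵥ x) = gaussianReal 0 (c ⬝ᵥ S.mulVec c).toNNReal

lemma sqrt_nat_atTop : Tendsto (fun k : ℕ => Real.sqrt k) atTop atTop := by
  apply tendsto_atTop_atTop.mpr
  intro b
  refine ⟨⌈b⌉₊ ^ 2, fun k hk => ?_⟩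
  have hk' : ((⌈b⌉₊ : ℝ)) ^ 2 ≤ (k : ℝ) := by exact_mod_cast hk
  calc b ≤ ⌈b⌉₊ := Nat.le_ceil b
    _ = Real.sqrt ((⌈b⌉₊ : ℝ) ^ 2) := by rw [Real.sqrt_sq (by positivity)]
    _ ≤ Real.sqrt k := Real.sqrt_le_sqrt hk'


noncomputable def cutoff (n m : ℕ) : BoundedContinuousFunction (Fin n → ℝ) ℝ :=
  BoundedContinuousFunction.ofNormedAddCommGroup (fun z => min 1 (max 0 (‖z‖ - m)))
    (by fun_prop) 1 (fun z => by
      rw [Real.norm_eq_abs, abs_le]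
      refine ⟨?_, min_le_left _ _⟩
      have h1 : (0:ℝ) ≤ max 0 (‖z‖ - m) := le_max_left _ _
      have h2 : (0:ℝ) ≤ min 1 (max 0 (‖z‖ - m)) := le_min (by norm_num) h1
      linarith)

lemma cutoff_apply (n m : ℕ) (z : Fin n → ℝ) : cutoff n m z = min 1 (max 0 (‖z‖ - m)) := rfl

lemma cutoff_nonneg (n m : ℕ) (z : Fin n → ℝ) : 0 ≤ cutoff n m z := by
  rw [cutoff_apply]; exact le_min (by norm_num) (le_max_left _ _)

lemma cutoff_le_one (n m : ℕ) (z : Fin n → ℝ) : cutoff n m z ≤ 1 := min_le_left _ _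

lemma cutoff_eq_one (n m : ℕ) (z : Fin n → ℝ) (hz : (m : ℝ) + 1 ≤ ‖z‖) : cutoff n m z = 1 := by
  rw [cutoff_apply, max_eq_right (by linarith), min_eq_left (by linarith)]

lemma cutoff_tendsto (n : ℕ) (μ : Measure (Fin n → ℝ)) [IsProbabilityMeasure μ] :
    Tendsto (fun m => ∫ z, cutoff n m z ∂μ) atTop (nhds 0) := by
  have := tendsto_integral_of_dominated_convergence (μ := μ)
    (F := fun m z => cutoff n m z) (f := fun _ => (0:ℝ)) (bound := fun _ => 1)
    (fun m => ((cutoff n m).continuous.measurable).aestronglyMeasurable)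
    (integrable_const 1)
    (fun m => Eventually.of_forall fun z => by
      rw [Real.norm_eq_abs, abs_le]
      beta_reduce
      exact ⟨by linarith [cutoff_nonneg n m z], cutoff_le_one n m z⟩)
    (Eventually.of_forall fun z => by
      apply Tendsto.congr' _ tendsto_const_nhds
      filter_upwards [eventually_ge_atTop ⌈‖z‖⌉₊] with m hm
      have hle : ‖z‖ - (m:ℝ) ≤ 0 := by
        have h1 := Nat.le_ceil ‖z‖
        have hm' : (⌈‖z‖⌉₊ : ℝ) ≤ m := by exact_mod_cast hm
        linarith
      rw [cutoff_apply, max_eq_left hle, min_eq_right (by norm_num)])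
  simpa using this

set_option maxHeartbeats 1000000 in
/-- Multivariate delta method with a linear functional: if `√k (T_k − θ) → N(0, Σ)` in
distribution, `Σ` symmetric positive semidefinite, `f : ℝ → ℝ` is continuously
differentiable (applied coordinatewise), `J = diag(f'(θ₁), …, f'(θₙ))` and `c ∈ ℝⁿ`, then
`√k (cᵀ f(T_k) − cᵀ f(θ)) → N(0, cᵀ J Σ Jᵀ c)` in distribution. -/
theorem stmt_4 {Ω : Type*} [MeasurableSpace Ω] (P : Measure Ω) [IsProbabilityMeasure P]
    (n : ℕ) (T : ℕ → Ω → (Fin n → ℝ)) (hT : ∀ k, Measurable (T k))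
    (θ : Fin n → ℝ) (S : Matrix (Fin n) (Fin n) ℝ) (hSsymm : S.IsSymm) (hSpsd : S.PosSemidef)
    (μ : Measure (Fin n → ℝ)) (hμ : IsCenteredGaussian μ S)
    (h : TendstoInDistribution P (fun k ω i => Real.sqrt k * (T k ω i - θ i)) μ)
    (f : ℝ → ℝ) (hf : ContDiff ℝ 1 f) (c : Fin n → ℝ) :
    TendstoInDistribution P
      (fun k ω => Real.sqrt k * ((c ⬝ᵥ fun i => f (T k ω i)) - (c ⬝ᵥ fun i => f (θ i))))
      (gaussianReal 0
        (c ⬝ᵥ ((Matrix.diagonal fun i => deriv f (θ i)) * S *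
          (Matrix.diagonal fun i => deriv f (θ i))ᵀ).mulVec c).toNNReal) := by
  have hμprob : IsProbabilityMeasure μ := hμ.1
  intro g
  set d : Fin n → ℝ := fun i => deriv f (θ i) * c i with hd
  set Z : ℕ → Ω → (Fin n → ℝ) := fun k ω i => Real.sqrt k * (T k ω i - θ i) with hZdef
  -- variance identity
  have hvar : c ⬝ᵥ ((Matrix.diagonal fun i => deriv f (θ i)) * S *
      (Matrix.diagonal fun i => deriv f (θ i))ᵀ).mulVec c = d ⬝ᵥ S.mulVec d := by
    simp only [hd]
    simp [dotProduct, Matrix.mulVec, Matrix.mul_apply, Finset.mul_sum, Finset.sum_mul,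
      Matrix.diagonal, Matrix.transpose_apply]
    apply Finset.sum_congr rfl; intro i _
    apply Finset.sum_congr rfl; intro j _
    ring
  have hdcont : Continuous (fun x : Fin n → ℝ => d ⬝ᵥ x) := by
    unfold dotProduct; fun_prop
  have hL : (∫ x, g x ∂(gaussianReal 0
      (c ⬝ᵥ ((Matrix.diagonal fun i => deriv f (θ i)) * S *
        (Matrix.diagonal fun i => deriv f (θ i))ᵀ).mulVec c).toNNReal))
      = ∫ x, g (d ⬝ᵥ x) ∂μ := by
    rw [hvar, ← hμ.2 d,
      integral_map hdcont.measurable.aemeasurable g.continuous.aestronglyMeasurable]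
  rw [hL]
  -- convergence of the linearized sequence
  have hWlim : Tendsto (fun k => ∫ ω, g (d ⬝ᵥ Z k ω) ∂P) atTop (nhds (∫ x, g (d ⬝ᵥ x) ∂μ)) := by
    have := h (g.compContinuous ⟨fun x => d ⬝ᵥ x, hdcont⟩)
    simpa using this
  -- measurability
  have hZm : ∀ k, Measurable (Z k) := by
    intro k
    apply measurable_pi_lambda
    intro i
    exact (((measurable_pi_apply i).comp (hT k)).sub measurable_const).const_mul _
  have hfm : Measurable f := hf.continuous.measurable
  have hYm : ∀ k : ℕ, Measurable (fun ω =>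
      Real.sqrt k * ((c ⬝ᵥ fun i => f (T k ω i)) - (c ⬝ᵥ fun i => f (θ i)))) := by
    intro k
    apply Measurable.const_mul
    apply Measurable.sub _ measurable_const
    unfold dotProduct
    apply Finset.measurable_sum
    intro i _
    exact (hfm.comp ((measurable_pi_apply i).comp (hT k))).const_mul _
  have hWm : ∀ k, Measurable (fun ω => d ⬝ᵥ Z k ω) := fun k =>
    hdcont.measurable.comp (hZm k)
  -- integrability helper
  have hint : ∀ (X : Ω → ℝ), Measurable X → Integrable (fun ω => g (X ω)) P := by
    intro X hX
    refine ⟨(g.continuous.measurable.comp hX).aestronglyMeasurable, ?_⟩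
    exact HasFiniteIntegral.of_bounded (C := ‖g‖)
      (Eventually.of_forall fun ω => g.norm_coe_le_norm (X ω))
  -- reduce to showing the difference of integrals tends to 0
  suffices hdiff : Tendsto (fun k : ℕ =>
      (∫ ω, g (Real.sqrt k * ((c ⬝ᵥ fun i => f (T k ω i)) - (c ⬝ᵥ fun i => f (θ i)))) ∂P) -
        ∫ ω, g (d ⬝ᵥ Z k ω) ∂P) atTop (nhds 0) by
    have h2 := hdiff.add hWlim
    simpa using h2
  rw [NormedAddCommGroup.tendsto_nhds_zero]
  intro ε hε
  set M := ‖g‖ with hMdef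
  have hM0 : 0 ≤ M := norm_nonneg g
  have hmul : Tendsto (fun m => 2 * M * ∫ z, cutoff n m z ∂μ) atTop (nhds 0) := by
    simpa using (cutoff_tendsto n μ).const_mul (2 * M)
  obtain ⟨m, hm⟩ := (hmul.eventually_lt_const (by positivity : (0:ℝ) < ε / 4)).exists
  set R : ℝ := (m : ℝ) + 1 with hR
  have hR0 : 0 < R := by positivity
  set Dd : ℝ := R * ∑ i, |d i| with hDdd
  have hDd0 : 0 ≤ Dd := by
    rw [hDdd]
    exact mul_nonneg (le_of_lt hR0) (Finset.sum_nonneg fun i _ => abs_nonneg _)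
  obtain ⟨δ0, hδ0, hg⟩ : ∃ δ > 0, ∀ x ∈ Set.Icc (-(Dd+1)) (Dd+1), ∀ y ∈ Set.Icc (-(Dd+1)) (Dd+1),
      dist x y < δ → dist (g x) (g y) < ε/4 := by
    have hc := (isCompact_Icc (a := -(Dd+1)) (b := Dd+1)).uniformContinuousOn_of_continuous
      g.continuous.continuousOn
    rw [Metric.uniformContinuousOn_iff] at hc
    exact hc (ε/4) (by positivity)
  set δ : ℝ := min δ0 1 with hδdef
  have hδpos : 0 < δ := lt_min hδ0 one_pos
  have hδle : δ ≤ δ0 := min_le_left _ _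
  have hδ1 : δ ≤ 1 := min_le_right _ _
  have hc0 : 0 ≤ ∑ i, |c i| := Finset.sum_nonneg fun i _ => abs_nonneg _
  set ε' : ℝ := δ / (R * (∑ i, |c i|) + 1) with hε'def
  have hε'0 : 0 < ε' := by
    rw [hε'def]
    apply div_pos hδpos
    nlinarith
  have hkey : ε' * (R * ∑ i, |c i|) < δ := by
    rw [hε'def, div_mul_eq_mul_div, div_lt_iff₀ (by nlinarith)]
    nlinarith
  have hdf : Continuous (deriv f) := hf.continuous_deriv le_rfl
  have hδf : ∀ i : Fin n, ∃ δ' > 0, ∀ u : ℝ, |u - θ i| < δ' →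
      |deriv f u - deriv f (θ i)| < ε' := by
    intro i
    have := Metric.continuous_iff.mp hdf (θ i) ε' hε'0
    simpa [Real.dist_eq] using this
  choose δf hδfpos hδfprop using hδf
  have E1 : ∀ᶠ k : ℕ in atTop, ∀ i, R / Real.sqrt k < δf i := by
    rw [eventually_all]
    intro i
    exact (tendsto_const_nhds.div_atTop sqrt_nat_atTop).eventually_lt_const (hδfpos i)
  have E2 : ∀ᶠ k : ℕ in atTop, 1 ≤ k := eventually_ge_atTop 1
  have E3 : ∀ᶠ k : ℕ in atTop, 2 * M * ∫ ω, cutoff n m (Z k ω) ∂P < ε / 2 := by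
    have h3 := (h (cutoff n m)).const_mul (2 * M)
    exact h3.eventually_lt_const (by linarith)
  filter_upwards [E1, E2, E3] with k hk1 hk2 hk3
  have hsk1 : (1:ℝ) ≤ Real.sqrt k := by
    rw [show (1:ℝ) = Real.sqrt 1 by simp]
    exact Real.sqrt_le_sqrt (by exact_mod_cast hk2)
  have hsk0 : 0 < Real.sqrt k := lt_of_lt_of_le one_pos hsk1
  -- the pointwise bound
  have hptw : ∀ ω, |g (Real.sqrt k * ((c ⬝ᵥ fun i => f (T k ω i)) - (c ⬝ᵥ fun i => f (θ i)))) -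
      g (d ⬝ᵥ Z k ω)| ≤ 2 * M * cutoff n m (Z k ω) + ε / 4 := by
    intro ω
    set Y : ℝ := Real.sqrt k * ((c ⬝ᵥ fun i => f (T k ω i)) - (c ⬝ᵥ fun i => f (θ i))) with hYd
    set W : ℝ := d ⬝ᵥ Z k ω with hWd
    have hgY : |g Y| ≤ M := by
      have := g.norm_coe_le_norm Y; rwa [Real.norm_eq_abs] at this
    have hgW : |g W| ≤ M := by
      have := g.norm_coe_le_norm W; rwa [Real.norm_eq_abs] at this
    by_cases hZR : ‖Z k ω‖ < R
    · have hZi : ∀ i, |Z k ω i| < R := fun i =>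
        lt_of_le_of_lt (by simpa using norm_le_pi_norm (Z k ω) i) hZR
      have hzi : ∀ i, Z k ω i = Real.sqrt k * (T k ω i - θ i) := fun i => by rw [hZdef]
      have hrem : ∀ i : Fin n, |f (T k ω i) - f (θ i) - deriv f (θ i) * (T k ω i - θ i)| ≤
          ε' * |T k ω i - θ i| := by
        intro i
        set r : ℝ := R / Real.sqrt k with hrdef
        have hr0 : 0 < r := div_pos hR0 hsk0
        have hTθ : |T k ω i - θ i| < r := by
          rw [hrdef, lt_div_iff₀ hsk0]
          have habs : |Z k ω i| = Real.sqrt k * |T k ω i - θ i| := by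
            rw [hzi i, abs_mul, abs_of_pos hsk0]
          calc |T k ω i - θ i| * Real.sqrt k = |Z k ω i| := by rw [habs]; ring
            _ < R := hZi i
        have hsub : Convex ℝ (Set.Icc (θ i - r) (θ i + r)) := convex_Icc _ _
        have hderiv : ∀ u ∈ Set.Icc (θ i - r) (θ i + r),
            HasDerivWithinAt (fun x => f x - deriv f (θ i) * x)
              (deriv f u - deriv f (θ i)) (Set.Icc (θ i - r) (θ i + r)) u := by
          intro u _
          have h1 : HasDerivAt f (deriv f u) u := ((hf.differentiable one_ne_zero) u).hasDerivAt
          have h2 : HasDerivAt (fun x : ℝ => deriv f (θ i) * x) (deriv f (θ i)) u := by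
            simpa using (hasDerivAt_id u).const_mul (deriv f (θ i))
          exact (h1.sub h2).hasDerivWithinAt
        have hbound : ∀ u ∈ Set.Icc (θ i - r) (θ i + r), ‖deriv f u - deriv f (θ i)‖ ≤ ε' := by
          intro u hu
          have h1 : |u - θ i| ≤ r := by
            rw [abs_le]; exact ⟨by linarith [hu.1], by linarith [hu.2]⟩
          rw [Real.norm_eq_abs]
          exact le_of_lt (hδfprop i u (lt_of_le_of_lt h1 (hk1 i)))
        have hθmem : θ i ∈ Set.Icc (θ i - r) (θ i + r) := by
          constructor <;> linarith
        have hTmem : T k ω i ∈ Set.Icc (θ i - r) (θ i + r) := by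
          have := abs_lt.mp hTθ
          constructor <;> linarith [this.1, this.2]
        have key := hsub.norm_image_sub_le_of_norm_hasDerivWithin_le hderiv hbound hθmem hTmem
        rw [Real.norm_eq_abs, Real.norm_eq_abs] at key
        have heq : f (T k ω i) - f (θ i) - deriv f (θ i) * (T k ω i - θ i)
            = (f (T k ω i) - deriv f (θ i) * T k ω i) - (f (θ i) - deriv f (θ i) * θ i) := by
          ring
        rw [heq]
        exact key
      have hterm : ∀ i : Fin n,
          |c i * (Real.sqrt k * (f (T k ω i) - f (θ i)) - deriv f (θ i) * Z k ω i)|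
            ≤ |c i| * (ε' * R) := by
        intro i
        rw [abs_mul]
        apply mul_le_mul_of_nonneg_left _ (abs_nonneg _)
        have h1 : Real.sqrt k * (f (T k ω i) - f (θ i)) - deriv f (θ i) * Z k ω i
            = Real.sqrt k * (f (T k ω i) - f (θ i) - deriv f (θ i) * (T k ω i - θ i)) := by
          rw [hzi i]; ring
        rw [h1, abs_mul, abs_of_pos hsk0]
        calc Real.sqrt k * |f (T k ω i) - f (θ i) - deriv f (θ i) * (T k ω i - θ i)|
            ≤ Real.sqrt k * (ε' * |T k ω i - θ i|) :=
              mul_le_mul_of_nonneg_left (hrem i) (le_of_lt hsk0)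
          _ = ε' * (Real.sqrt k * |T k ω i - θ i|) := by ring
          _ = ε' * |Z k ω i| := by rw [hzi i, abs_mul, abs_of_pos hsk0]
          _ ≤ ε' * R := mul_le_mul_of_nonneg_left (le_of_lt (hZi i)) (le_of_lt hε'0)
      have hYWdiff : Y - W = ∑ i, c i *
          (Real.sqrt k * (f (T k ω i) - f (θ i)) - deriv f (θ i) * Z k ω i) := by
        rw [hYd, hWd]
        simp only [dotProduct, hd]
        rw [mul_sub, Finset.mul_sum, Finset.mul_sum, ← Finset.sum_sub_distrib,
          ← Finset.sum_sub_distrib]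
        apply Finset.sum_congr rfl
        intro i _
        ring
      have hYW : |Y - W| < δ := by
        rw [hYWdiff]
        calc |∑ i, c i * (Real.sqrt k * (f (T k ω i) - f (θ i)) - deriv f (θ i) * Z k ω i)|
            ≤ ∑ i, |c i * (Real.sqrt k * (f (T k ω i) - f (θ i)) - deriv f (θ i) * Z k ω i)| :=
              Finset.abs_sum_le_sum_abs _ _
          _ ≤ ∑ i, |c i| * (ε' * R) := Finset.sum_le_sum (fun i _ => hterm i)
          _ = ε' * (R * ∑ i, |c i|) := by rw [← Finset.sum_mul]; ring
          _ < δ := hkey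
      have hWabs : |W| ≤ Dd := by
        rw [hWd, hDdd]
        calc |d ⬝ᵥ Z k ω| ≤ ∑ i, |d i * Z k ω i| := Finset.abs_sum_le_sum_abs _ _
          _ ≤ ∑ i, |d i| * R := Finset.sum_le_sum (fun i _ => by
              rw [abs_mul]
              exact mul_le_mul_of_nonneg_left (le_of_lt (hZi i)) (abs_nonneg _))
          _ = R * ∑ i, |d i| := by rw [← Finset.sum_mul]; ring
      have hWmem : W ∈ Set.Icc (-(Dd+1)) (Dd+1) := by
        have := abs_le.mp hWabs
        constructor <;> linarith [this.1, this.2]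
      have hYmem : Y ∈ Set.Icc (-(Dd+1)) (Dd+1) := by
        have h1 := abs_le.mp hWabs
        have h2 := abs_lt.mp hYW
        constructor
        · have : -(Dd + δ) ≤ Y := by nlinarith [h1.1, h2.1]
          linarith
        · nlinarith [h1.2, h2.2]
      have hgYW := hg Y hYmem W hWmem (by rw [Real.dist_eq]; exact lt_of_lt_of_le hYW hδle)
      rw [Real.dist_eq] at hgYW
      have hψnn : 0 ≤ 2 * M * cutoff n m (Z k ω) := mul_nonneg (by linarith) (cutoff_nonneg n m _)
      linarith
    · push_neg at hZR
      have hone : cutoff n m (Z k ω) = 1 := cutoff_eq_one n m _ (by rw [← hR]; exact hZR)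
      rw [hone]
      calc |g Y - g W| ≤ |g Y| + |g W| := abs_sub _ _
        _ ≤ M + M := add_le_add hgY hgW
        _ ≤ 2 * M * 1 + ε / 4 := by linarith
  -- conclude with the integral estimate
  have hintY := hint _ (hYm k)
  have hintW := hint _ (hWm k)
  have hintψ : Integrable (fun ω => cutoff n m (Z k ω)) P :=
    ⟨((cutoff n m).continuous.measurable.comp (hZm k)).aestronglyMeasurable,
      HasFiniteIntegral.of_bounded (C := ‖cutoff n m‖)
        (Eventually.of_forall fun ω => (cutoff n m).norm_coe_le_norm _)⟩
  rw [Real.norm_eq_abs, ← integral_sub hintY hintW]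
  calc |∫ ω, (g (Real.sqrt k * ((c ⬝ᵥ fun i => f (T k ω i)) - (c ⬝ᵥ fun i => f (θ i)))) -
        g (d ⬝ᵥ Z k ω)) ∂P|
      ≤ ∫ ω, |g (Real.sqrt k * ((c ⬝ᵥ fun i => f (T k ω i)) - (c ⬝ᵥ fun i => f (θ i)))) -
        g (d ⬝ᵥ Z k ω)| ∂P := by
          simpa [Real.norm_eq_abs] using norm_integral_le_integral_norm (μ := P)
            (fun ω => g (Real.sqrt k * ((c ⬝ᵥ fun i => f (T k ω i)) - (c ⬝ᵥ fun i => f (θ i)))) -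
              g (d ⬝ᵥ Z k ω))
    _ ≤ ∫ ω, (2 * M * cutoff n m (Z k ω) + ε / 4) ∂P :=
        integral_mono (hintY.sub hintW).abs
          ((hintψ.const_mul _).add (integrable_const _)) hptw
    _ = 2 * M * (∫ ω, cutoff n m (Z k ω) ∂P) + ε / 4 := by
        rw [integral_add (hintψ.const_mul _) (integrable_const _), integral_const_mul,
          integral_const]
        simp [measure_univ]
    _ < ε / 2 + ε / 4 := by linarith
    _ < ε := by linarith
end

section
/- For all real numbers λ₁ > λ₂ > 0 and all k > 0, Φ(√(2k) · (√λ₁ − √λ₂)) > Φ(√k · (λ₁ − λ₂) / √(λ₁ + λ₂)). -/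
open MeasureTheory ProbabilityTheory

lemma stdNormalCDF_strictMono : StrictMono stdNormalCDF := by
  intro x y hxy
  unfold stdNormalCDF
  rw [cdf_eq_real, cdf_eq_real, measureReal_def, measureReal_def]
  have hne : (1 : NNReal) ≠ 0 := one_ne_zero
  have hac := gaussianReal_absolutelyContinuous' 0 hne
  have hpos : 0 < gaussianReal 0 1 (Set.Ioc x y) := by
    rw [pos_iff_ne_zero]
    intro h0
    have := hac h0
    rw [Real.volume_Ioc] at this
    simp only [ENNReal.ofReal_eq_zero, sub_nonpos] at this
    linarith
  have hsplit : gaussianReal 0 1 (Set.Iic x) + gaussianReal 0 1 (Set.Ioc x y)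
      = gaussianReal 0 1 (Set.Iic y) := by
    rw [← measure_union (Set.Iic_disjoint_Ioc le_rfl) measurableSet_Ioc,
      Set.Iic_union_Ioc_eq_Iic hxy.le]
  have hlt : gaussianReal 0 1 (Set.Iic x) < gaussianReal 0 1 (Set.Iic y) := by
    rw [← hsplit]
    exact ENNReal.lt_add_right (measure_ne_top _ _) hpos.ne'
  exact ENNReal.toReal_strict_mono (measure_ne_top _ _) hlt

/-- For all `λ₁ > λ₂ > 0` and all `k > 0`,
`Φ(√(2k) (√λ₁ − √λ₂)) > Φ(√k (λ₁ − λ₂)/√(λ₁ + λ₂))`. -/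
theorem stmt_10 (lam1 lam2 k : ℝ) (h2 : 0 < lam2) (h12 : lam2 < lam1) (hk : 0 < k) :
    stdNormalCDF (Real.sqrt (2 * k) * (Real.sqrt lam1 - Real.sqrt lam2))
      > stdNormalCDF (Real.sqrt k * (lam1 - lam2) / Real.sqrt (lam1 + lam2)) := by
  apply stdNormalCDF_strictMono
  have h1 : 0 < lam1 := h2.trans h12
  have hs1 : 0 < Real.sqrt lam1 := Real.sqrt_pos.mpr h1
  have hs2 : 0 < Real.sqrt lam2 := Real.sqrt_pos.mpr h2
  have hsk : 0 < Real.sqrt k := Real.sqrt_pos.mpr hk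
  have hss : 0 < Real.sqrt (lam1 + lam2) := Real.sqrt_pos.mpr (by linarith)
  have hd : 0 < Real.sqrt lam1 - Real.sqrt lam2 := by
    have := Real.sqrt_lt_sqrt h2.le h12
    linarith
  have hfac : lam1 - lam2 = (Real.sqrt lam1 - Real.sqrt lam2) * (Real.sqrt lam1 + Real.sqrt lam2) := by
    have e1 : Real.sqrt lam1 * Real.sqrt lam1 = lam1 := Real.mul_self_sqrt h1.le
    have e2 : Real.sqrt lam2 * Real.sqrt lam2 = lam2 := Real.mul_self_sqrt h2.le
    ring_nf
    nlinarith
  have h2k : Real.sqrt (2 * k) = Real.sqrt 2 * Real.sqrt k := Real.sqrt_mul (by norm_num) k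
  rw [hfac, h2k, div_lt_iff₀ hss]
  -- goal: √k * ((√λ₁-√λ₂)(√λ₁+√λ₂)) < √2 √k (√λ₁-√λ₂) * √(λ₁+λ₂)
  have key : Real.sqrt lam1 + Real.sqrt lam2 < Real.sqrt 2 * Real.sqrt (lam1 + lam2) := by
    have hsq : (Real.sqrt lam1 + Real.sqrt lam2)^2 < (Real.sqrt 2 * Real.sqrt (lam1 + lam2))^2 := by
      have e1 : Real.sqrt lam1 * Real.sqrt lam1 = lam1 := Real.mul_self_sqrt h1.le
      have e2 : Real.sqrt lam2 * Real.sqrt lam2 = lam2 := Real.mul_self_sqrt h2.le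
      have e3 : Real.sqrt (lam1+lam2) * Real.sqrt (lam1+lam2) = lam1+lam2 :=
        Real.mul_self_sqrt (by linarith)
      have e4 : Real.sqrt 2 * Real.sqrt 2 = 2 := Real.mul_self_sqrt (by norm_num)
      have hamgm : 2 * Real.sqrt lam1 * Real.sqrt lam2 < lam1 + lam2 := by nlinarith
      nlinarith
    exact lt_of_pow_lt_pow_left₀ 2 (by positivity) hsq
  nlinarith [mul_lt_mul_of_pos_left key (mul_pos hsk hd)]
end

section
/- (Core of Theorem 2, exact-Gaussian form.) Let n ≥ 2, let c > 0, and let X₂, …, Xₙ be independent real random variables with X_j distributed as Gaussian N(m_j, c). For m ∈ ℝ let X₁(m) be a Gaussian N(m, c) random variable independent of X₂, …, Xₙ. Then the winning probability m ↦ P(X₁(m) > X_j for all j = 2, …, n) is strictly increasing in m. Consequently, if each action α of agent 1 yields a score distributed N(f(χ(α)), c) with variance c not depending on α, and arg max_α f(χ(α)) = arg max_α χ(α) = A⋆, then agent 1's probability of winning (having the strictly highest score) is maximized exactly at the natural action A⋆, regardless of the means m₂, …, mₙ chosen by the other agents. -/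
open MeasureTheory ProbabilityTheory Real

/-- A Gaussian measure gives positive mass to any measurable set of positive volume. -/
lemma gaussianReal_pos_of_volume_pos (ν : ℝ) {v : NNReal} (hv : v ≠ 0) {s : Set ℝ}
    (hvol : 0 < MeasureTheory.volume s) : 0 < gaussianReal ν v s := by
  rw [gaussianReal_apply ν hv]
  rw [lintegral_pos_iff_support (measurable_gaussianPDF ν v)]
  have hs : Function.support (gaussianPDF ν v) = Set.univ :=
    Set.eq_univ_of_forall fun x => (gaussianPDF_pos ν hv x).ne'
  rw [hs, Measure.restrict_apply_univ]
  exact hvol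

/-- The Gaussian CDF is strictly monotone. -/
lemma gaussianCDF_strictMono (ν : ℝ) {v : NNReal} (hv : v ≠ 0) :
    StrictMono (fun x => gaussianReal ν v (Set.Iio x)) := by
  intro a b hab
  have hdisj : Disjoint (Set.Iio a) (Set.Ico a b) := by
    rw [Set.disjoint_left]
    intro x hx hx'
    exact absurd hx'.1 (not_le.mpr hx)
  have hunion : Set.Iio a ∪ Set.Ico a b = Set.Iio b := Set.Iio_union_Ico_eq_Iio hab.le
  have hpos : 0 < gaussianReal ν v (Set.Ico a b) := by
    refine gaussianReal_pos_of_volume_pos ν hv ?_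
    rw [Real.volume_Ico]
    simp [hab]
  calc gaussianReal ν v (Set.Iio a)
      < gaussianReal ν v (Set.Iio a) + gaussianReal ν v (Set.Ico a b) :=
        ENNReal.lt_add_right (measure_ne_top _ _) hpos.ne'
    _ = gaussianReal ν v (Set.Iio b) := by
        rw [← measure_union hdisj measurableSet_Ico, hunion]

/-- Core of Theorem 2, exact-Gaussian form. Agents are indexed by `Fin n` (`n ≥ 2`), agent 1
being index `0`. For each possible mean `μ` of agent 1, `X μ : Fin n → Ω → ℝ` is an
independent family of scores, with `X μ 0 ~ N(μ, c)` and `X μ j ~ N(m j, c)` for `j ≠ 0`,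
all with the same variance `c > 0`. Then the winning probability
`μ ↦ P(X μ 0 > X μ j for all j ≠ 0)` is strictly increasing in `μ`. Consequently, if each
action `α` of agent 1 yields a score mean `f (χ α)` and
`arg max f ∘ χ = arg max χ = A⋆`, then agent 1's winning probability is maximized at the
natural action `A⋆`, regardless of the other agents' means `m`. -/
theorem stmt_11 (n : ℕ) [NeZero n] (hn : 2 ≤ n) (c : ℝ) (hc : 0 < c)
    {Ω : Type*} [MeasurableSpace Ω] (P : Measure Ω) [IsProbabilityMeasure P]
    (X : ℝ → Fin n → Ω → ℝ) (m : Fin n → ℝ)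
    (hmeas : ∀ μ i, Measurable (X μ i))
    (hindep : ∀ μ, iIndepFun (X μ) P)
    (hX0 : ∀ μ : ℝ, P.map (X μ 0) = gaussianReal μ c.toNNReal)
    (hXj : ∀ μ : ℝ, ∀ j : Fin n, j ≠ 0 → P.map (X μ j) = gaussianReal (m j) c.toNNReal)
    {A : Type*} (χ : A → ℝ) (f : ℝ → ℝ) (Astar : A)
    (hchi : ∀ α, χ α ≤ χ Astar) (hfchi : ∀ α, f (χ α) ≤ f (χ Astar)) :
    StrictMono (fun μ : ℝ =>
        (P {ω | ∀ j : Fin n, j ≠ 0 → X μ 0 ω > X μ j ω}).toReal)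
      ∧ ∀ α : A,
        P {ω | ∀ j : Fin n, j ≠ 0 → X (f (χ α)) 0 ω > X (f (χ α)) j ω}
          ≤ P {ω | ∀ j : Fin n, j ≠ 0 → X (f (χ Astar)) 0 ω > X (f (χ Astar)) j ω} := by
  classical
  have hct : c.toNNReal ≠ 0 := by
    simp only [ne_eq, Real.toNNReal_eq_zero, not_le]
    exact hc
  set ct := c.toNNReal with hctdef
  set T : Finset (Fin n) := {(0 : Fin n)}ᶜ with hTdef
  have hTne : T.Nonempty := by
    refine ⟨⟨1, by omega⟩, ?_⟩
    simp only [hTdef, Finset.mem_compl, Finset.mem_singleton]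
    intro h
    have := congrArg Fin.val h
    simp at this
  set F : Fin n → ℝ → ENNReal := fun j x => gaussianReal (m j) ct (Set.Iio x) with hFdef
  set G : ℝ → ENNReal := fun x => ∏ j ∈ T, F j x with hGdef
  have hFstrict : ∀ j, StrictMono (F j) := fun j => gaussianCDF_strictMono (m j) hct
  have hFpos : ∀ j x, 0 < F j x := by
    intro j x
    refine gaussianReal_pos_of_volume_pos (m j) hct ?_
    simp [Real.volume_Iio]
  have hFne_top : ∀ j x, F j x ≠ ⊤ := fun j x => measure_ne_top _ _
  have hGmeas : Measurable G :=
    Finset.measurable_prod _ fun j _ => (hFstrict j).monotone.measurable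
  have hGmono : Monotone G := fun a b hab =>
    Finset.prod_le_prod' fun j _ => (hFstrict j).monotone hab
  have hGstrict : StrictMono G := by
    intro a b hab
    have hcoe : ∀ x, G x = ↑(∏ j ∈ T, (F j x).toNNReal) := by
      intro x
      rw [hGdef]
      push_cast
      exact Finset.prod_congr rfl fun j _ => (ENNReal.coe_toNNReal (hFne_top j x)).symm
    rw [hcoe a, hcoe b, ENNReal.coe_lt_coe]
    refine Finset.prod_lt_prod_of_nonempty ?_ ?_ hTne
    · intro j _
      exact ENNReal.toNNReal_pos (hFpos j a).ne' (hFne_top j a)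
    · intro j _
      exact (ENNReal.toNNReal_lt_toNNReal (hFne_top j a) (hFne_top j b)).mpr
        (hFstrict j hab)
  have hGle1 : ∀ x, G x ≤ 1 := by
    intro x
    calc G x ≤ ∏ _j ∈ T, 1 :=
          Finset.prod_le_prod' fun j _ => prob_le_one
      _ = 1 := Finset.prod_const_one
  -- key representation of the winning probability
  have key : ∀ μ : ℝ, P {ω | ∀ j : Fin n, j ≠ 0 → X μ 0 ω > X μ j ω}
      = ∫⁻ x, G x ∂(gaussianReal μ ct) := by
    intro μ
    set Y : Ω → ((j : T) → ℝ) := fun ω j => X μ j ω with hYdef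
    have hYmeas : Measurable Y := measurable_pi_lambda _ fun j => hmeas μ j
    have hindep01 : IndepFun (X μ 0) Y P := by
      have h := (hindep μ).indepFun_finset {0} T (by simp [hTdef]) (hmeas μ)
      have h2 := h.comp
        (φ := fun g : ((i : ({0} : Finset (Fin n))) → ℝ) => g ⟨0, Finset.mem_singleton_self 0⟩)
        (_mγ := inferInstance) (ψ := id) (measurable_pi_apply _) measurable_id
      exact h2
    have hmap : P.map (fun ω => (X μ 0 ω, Y ω)) = (P.map (X μ 0)).prod (P.map Y) :=
      (indepFun_iff_map_prod_eq_prod_map_map (hmeas μ 0).aemeasurable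
        hYmeas.aemeasurable).mp hindep01
    set S : Set (ℝ × ((j : T) → ℝ)) := {p | ∀ j : T, p.2 j < p.1} with hSdef
    have hSmeas : MeasurableSet S := by
      have : S = ⋂ j : T, {p : ℝ × ((j : T) → ℝ) | p.2 j < p.1} := by
        ext p; simp [hSdef]
      rw [this]
      exact MeasurableSet.iInter fun j =>
        measurableSet_lt (measurable_snd.eval) measurable_fst
    have hevent : {ω | ∀ j : Fin n, j ≠ 0 → X μ 0 ω > X μ j ω}
        = (fun ω => (X μ 0 ω, Y ω)) ⁻¹' S := by
      ext ω
      simp only [Set.mem_setOf_eq, Set.mem_preimage, hSdef, hYdef]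
      constructor
      · rintro h ⟨j, hj⟩
        exact h j (by simpa [hTdef] using hj)
      · intro h j hj
        exact h ⟨j, by simp [hTdef, hj]⟩
    rw [hevent, ← Measure.map_apply ((hmeas μ 0).prodMk hYmeas) hSmeas, hmap,
      Measure.prod_apply hSmeas, hX0 μ]
    refine lintegral_congr fun x => ?_
    have hpre : Prod.mk x ⁻¹' S = {y : (j : T) → ℝ | ∀ j : T, y j < x} := rfl
    have hset : MeasurableSet {y : (j : T) → ℝ | ∀ j : T, y j < x} := by
      have : {y : (j : T) → ℝ | ∀ j : T, y j < x} = ⋂ j : T, {y | y j < x} := by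
        ext y; simp
      rw [this]
      exact MeasurableSet.iInter fun j =>
        measurableSet_lt (measurable_pi_apply j) measurable_const
    rw [hpre, Measure.map_apply hYmeas hset]
    have hYpre : Y ⁻¹' {y : (j : T) → ℝ | ∀ j : T, y j < x}
        = ⋂ j ∈ T, X μ j ⁻¹' Set.Iio x := by
      ext ω
      simp [hYdef, Subtype.forall]
    rw [hYpre, (hindep μ).measure_inter_preimage_eq_mul T
      (sets := fun _ => Set.Iio x) (fun i _ => measurableSet_Iio)]
    refine Finset.prod_congr rfl fun j hj => ?_
    rw [← Measure.map_apply (hmeas μ j) measurableSet_Iio,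
      hXj μ j (by simpa [hTdef] using hj)]
  -- translation of the Gaussian
  have keyt : ∀ μ : ℝ, ∫⁻ x, G x ∂(gaussianReal μ ct)
      = ∫⁻ x, G (x + μ) ∂(gaussianReal 0 ct) := by
    intro μ
    conv_lhs => rw [show (μ : ℝ) = 0 + μ from (zero_add μ).symm,
      ← gaussianReal_map_add_const (μ := 0) (v := ct) μ]
    rw [lintegral_map hGmeas (measurable_add_const μ)]
  have hfin : ∀ μ : ℝ, ∫⁻ x, G (x + μ) ∂(gaussianReal 0 ct) ≠ ⊤ := by
    intro μ
    refine ne_top_of_le_ne_top (by simp : (1 : ENNReal) ≠ ⊤) ?_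
    calc ∫⁻ x, G (x + μ) ∂(gaussianReal 0 ct) ≤ ∫⁻ _x, 1 ∂(gaussianReal 0 ct) :=
          lintegral_mono fun x => hGle1 _
      _ = 1 := by simp
  have hstrictENN : ∀ {a b : ℝ}, a < b →
      P {ω | ∀ j : Fin n, j ≠ 0 → X a 0 ω > X a j ω}
        < P {ω | ∀ j : Fin n, j ≠ 0 → X b 0 ω > X b j ω} := by
    intro a b hab
    rw [key a, key b, keyt a, keyt b]
    refine lintegral_strict_mono (IsProbabilityMeasure.ne_zero _)
      ((hGmeas.comp (measurable_add_const b)).aemeasurable) (hfin a) ?_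
    exact Filter.Eventually.of_forall fun x => hGstrict (by linarith)
  constructor
  · intro a b hab
    exact (ENNReal.toReal_lt_toReal (measure_ne_top P _) (measure_ne_top P _)).mpr
      (hstrictENN hab)
  · intro α
    rcases eq_or_lt_of_le (hfchi α) with h | h
    · rw [h]
    · exact (hstrictENN h).le
end
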